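/- Let β > 0, 0 ≤ T < τ̄, F₁, F₂ ∈ ℝ constants, and let A = (A₁, A₂) ∈ ℝ² solve −A = (β/(β+1))·[[2,−1],[−1,2]]·A + (F₁, F₂). Then Y(t) = (τ̄−t)A − (τ̄−T)Φ(t;T,τ̄)A, with Φ the fundamental matrix Φ(t;T,τ̄) = (1/2)((τ̄−T)/(τ̄−t))^(β/(β+1))[[1,1],[1,1]] + (1/2)((τ̄−T)/(τ̄−t))^(3β/(β+1))[[1,−1],[−1,1]], solves on [T, τ̄) the equation Ẏ − (β/(β+1))·(1/(τ̄−t))·[[2,−1],[−1,2]] Y = (F₁, F₂) with Y(T) = (0,0). -/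

import Mathlib

noncomputable def fundMatrix9 (β T τ : ℝ) (t : ℝ) : Matrix (Fin 2) (Fin 2) ℝ :=
  (((1 : ℝ) / 2) * ((τ - T) / (τ - t)) ^ (β / (β + 1))) •
      (!![1, 1; 1, 1] : Matrix (Fin 2) (Fin 2) ℝ) +
    (((1 : ℝ) / 2) * ((τ - T) / (τ - t)) ^ (3 * β / (β + 1))) •
      (!![1, -1; -1, 1] : Matrix (Fin 2) (Fin 2) ℝ)

lemma aux9 (T τ c t : ℝ) (hTτ : T < τ) (ht : t < τ) :
    HasDerivAt (fun s => ((τ - T) / (τ - s)) ^ c)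
      (c * ((τ - T) / (τ - t)) ^ c / (τ - t)) t := by
  have ht' : (0:ℝ) < τ - t := by linarith
  have hT' : (0:ℝ) < τ - T := by linarith
  have hr : (0:ℝ) < (τ - T) / (τ - t) := div_pos hT' ht'
  have h1 : HasDerivAt (fun s : ℝ => (τ - T) / (τ - s)) ((τ - T) / (τ - t) ^ 2) t := by
    have h2 : HasDerivAt (fun s : ℝ => τ - s) (-1) t := by
      simpa using (hasDerivAt_id t).const_sub τ
    have h3 := (h2.inv (ne_of_gt ht')).const_mul (τ - T)
    refine HasDerivAt.congr_deriv h3 ?_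
    field_simp
  have h4 := h1.rpow_const (p := c) (Or.inl (ne_of_gt hr))
  convert h4 using 1
  rw [Real.rpow_sub_one (ne_of_gt hr)]
  field_simp

theorem stmt9 (β T τ F₁ F₂ : ℝ) (hβ : 0 < β) (hT : 0 ≤ T) (hTτ : T < τ)
    (A : Fin 2 → ℝ)
    (hA : -A = (β / (β + 1)) • Matrix.mulVec !![2, -1; -1, 2] A + ![F₁, F₂])
    (Y : ℝ → Fin 2 → ℝ)
    (hY : ∀ t, Y t = (τ - t) • A - (τ - T) • Matrix.mulVec (fundMatrix9 β T τ t) A) :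
    Y T = 0 ∧
    ∀ t ∈ Set.Ico T τ, ∀ p : Fin 2,
      HasDerivAt (fun s => Y s p)
        (((β / (β + 1)) * (τ - t)⁻¹) * Matrix.mulVec !![2, -1; -1, 2] (Y t) p
          + ![F₁, F₂] p) t := by
  have hβ1 : β + 1 ≠ 0 := by linarith
  have hA0 : -A 0 = β / (β + 1) * (2 * A 0 + -1 * A 1) + F₁ := by
    have := congrFun hA 0
    simpa [Matrix.mulVec, dotProduct, Fin.sum_univ_two] using this
  have hA1 : -A 1 = β / (β + 1) * (-1 * A 0 + 2 * A 1) + F₂ := by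
    have := congrFun hA 1
    simpa [Matrix.mulVec, dotProduct, Fin.sum_univ_two] using this
  constructor
  · rw [hY T]
    have h0 : τ - T ≠ 0 := by intro h; linarith
    funext p
    fin_cases p <;>
      simp [fundMatrix9, div_self h0, Matrix.mulVec, dotProduct, Fin.sum_univ_two] <;>
      ring
  · intro t ht p
    have ht2 : t < τ := ht.2
    have ht' : (0:ℝ) < τ - t := by linarith
    have hga := aux9 T τ (β / (β + 1)) t hTτ ht2
    have hgb := aux9 T τ (3 * β / (β + 1)) t hTτ ht2
    have hlin : HasDerivAt (fun s : ℝ => τ - s) (-1) t := by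
      simpa using (hasDerivAt_id t).const_sub τ
    have hF1 : F₁ = -A 0 - β / (β + 1) * (2 * A 0 + -1 * A 1) := by linarith
    have hF2 : F₂ = -A 1 - β / (β + 1) * (-1 * A 0 + 2 * A 1) := by linarith
    fin_cases p <;>
      simp only [hY, fundMatrix9, Matrix.mulVec, dotProduct, Fin.sum_univ_two] <;>
      simp [Matrix.mulVec, dotProduct, Fin.sum_univ_two]
    · have hpart := ((((hga.const_mul 2⁻¹).add (hgb.const_mul 2⁻¹)).mul_const (A 0)).add
          (((hga.const_mul 2⁻¹).add (hgb.const_mul 2⁻¹).neg).mul_const (A 1))).const_mul (τ - T)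
      have h := (hlin.mul_const (A 0)).sub hpart
      refine HasDerivAt.congr_deriv h ?_
      rw [hF1]
      field_simp
      ring
    · have hpart := ((((hga.const_mul 2⁻¹).add (hgb.const_mul 2⁻¹).neg).mul_const (A 0)).add
          (((hga.const_mul 2⁻¹).add (hgb.const_mul 2⁻¹)).mul_const (A 1))).const_mul (τ - T)
      have h := (hlin.mul_const (A 1)).sub hpart
      refine HasDerivAt.congr_deriv h ?_
      rw [hF2]
      field_simp
      ring
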